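/- Let D be an integral domain and ⋆ a semistar operation on D. The following are equivalent: (i) D is a ⋆-domain [respectively: a P⋆MD]; (ii) for all E, F ∈ f(D) there exists a nonzero fractional ideal H of D [respectively: H ∈ f(D)] with H ⊆ (E : F) such that E^⋆ = (FH)^⋆; (iii) for all E, F ∈ f(D), (F·(E : F))^⋆ = E^⋆ [respectively: (F·(E : F))^{⋆_f} = E^⋆]. -/

import Mathlib

open Submodule

namespace Semistar

/-- A semistar operation on an integral domain `D` with quotient field `K`:
a map on `D`-submodules of `K` satisfying the semistar axioms on nonzero submodules. -/
structure SemistarOp (D K : Type*) [CommRing D] [Field K] [Algebra D K] where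
  star : Submodule D K → Submodule D K
  star_smul_mul : ∀ x : K, x ≠ 0 → ∀ E : Submodule D K, E ≠ ⊥ →
    star (span D {x} * E) = span D {x} * star E
  star_mono : ∀ E F : Submodule D K, E ≠ ⊥ → F ≠ ⊥ → E ≤ F → star E ≤ star F
  le_star : ∀ E : Submodule D K, E ≠ ⊥ → E ≤ star E
  star_star : ∀ E : Submodule D K, E ≠ ⊥ → star (star E) = star E

variable {D K : Type*} [CommRing D] [Field K] [Algebra D K]

/-- The finite-type semistar operation `⋆_f` associated to `⋆`. -/
def finStar (t : Submodule D K → Submodule D K) : Submodule D K → Submodule D K :=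
  fun E => ⨆ F ∈ {F : Submodule D K | F ≠ ⊥ ∧ F.FG ∧ F ≤ E}, t F

/-- The image in `K` of an ideal of `D`. -/
def idealToK (I : Ideal D) : Submodule D K :=
  Submodule.map (Algebra.linearMap D K) I

/-- `I` is a quasi-`⋆`-ideal: a nonzero ideal of `D` with `I^⋆ ∩ D = I`. -/
def IsQuasiIdeal (t : Submodule D K → Submodule D K) (I : Ideal D) : Prop :=
  I ≠ ⊥ ∧ t (idealToK I) ⊓ 1 = idealToK I

/-- `M` is a quasi-`⋆`-maximal ideal: maximal among quasi-`⋆`-ideals. -/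
def IsQuasiMaximal (t : Submodule D K → Submodule D K) (M : Ideal D) : Prop :=
  IsQuasiIdeal t M ∧ ∀ J : Ideal D, IsQuasiIdeal t J → M ≤ J → M = J

/-- The localization `E·D_M` of a submodule `E` of `K` at (the complement of) an ideal `M`. -/
def locAt (M : Ideal D) (E : Submodule D K) : Submodule D K where
  carrier := {x : K | ∃ s ∈ Submonoid.closure ((M : Set D)ᶜ), s • x ∈ E}
  add_mem' := by
    rintro x y ⟨s, hs, hsx⟩ ⟨t, ht, hty⟩
    refine ⟨s * t, mul_mem hs ht, ?_⟩
    have h1 : (s * t) • x ∈ E := by rw [mul_comm, mul_smul]; exact E.smul_mem t hsx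
    have h2 : (s * t) • y ∈ E := by rw [mul_smul]; exact E.smul_mem s hty
    rw [smul_add]; exact E.add_mem h1 h2
  zero_mem' := ⟨1, Submonoid.one_mem _, by simp⟩
  smul_mem' := by
    rintro c x ⟨s, hs, hsx⟩
    exact ⟨s, hs, by rw [smul_comm]; exact E.smul_mem c hsx⟩

/-- The spectral semistar operation `⋆̃` associated to `⋆`, defined by
`E^⋆̃ = ⋂ { E·D_M : M quasi-`⋆_f`-maximal }`. -/
def tildeStar (s : SemistarOp D K) : Submodule D K → Submodule D K :=
  fun E => ⨅ M ∈ {M : Ideal D | IsQuasiMaximal (finStar s.star) M}, locAt M E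

/-- The localizing system `F^⋆` of ideals `I` with `I^⋆ = D^⋆`. -/
def starLS (s : SemistarOp D K) : Set (Ideal D) :=
  {I : Ideal D | I ≠ ⊥ ∧ s.star (idealToK I) = s.star 1}

/-- The stable semistar operation `⋆̄` associated to `⋆`:
`E^⋆̄ = ⋃ {(E : J) : J ∈ F^⋆}`. -/
def barStar (s : SemistarOp D K) : Submodule D K → Submodule D K :=
  fun E => ⨆ J ∈ starLS s, E / idealToK J

/-- `I` is `⋆`-invertible: `(I·I⁻¹)^⋆ = D^⋆`. -/
def IsStarInvertible (t : Submodule D K → Submodule D K) (I : Submodule D K) : Prop :=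
  t (I * (1 / I)) = t 1

/-- `D` is a `⋆`-domain: every nonzero finitely generated `D`-submodule of `K`
is `⋆`-invertible. -/
def IsStarDomain (t : Submodule D K → Submodule D K) : Prop :=
  ∀ I : Submodule D K, I ≠ ⊥ → I.FG → IsStarInvertible t I

/-- `D` is a Prüfer `⋆`-multiplication domain: every nonzero finitely generated
ideal of `D` is `⋆_f`-invertible. -/
def IsPMD (t : Submodule D K → Submodule D K) : Prop :=
  ∀ I : Submodule D K, I ≠ ⊥ → I.FG → I ≤ 1 → IsStarInvertible (finStar t) I

/-- `D` is a P⋆MD for the semistar operation `s`. -/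
abbrev IsPStarMD (s : SemistarOp D K) : Prop := IsPMD s.star

/-- Equality of two semistar operations (as maps on nonzero submodules):
`D` is a `(∗₁, ∗₂)`-domain. -/
def StarEq (t₁ t₂ : Submodule D K → Submodule D K) : Prop :=
  ∀ E : Submodule D K, E ≠ ⊥ → t₁ E = t₂ E

/-- `⋆` is a.b. -/
def IsAB (t : Submodule D K → Submodule D K) : Prop :=
  ∀ E : Submodule D K, E ≠ ⊥ → E.FG → ∀ F G : Submodule D K, F ≠ ⊥ → G ≠ ⊥ →
    t (E * F) ≤ t (E * G) → t F ≤ t G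

/-- `⋆` is e.a.b. -/
def IsEAB (t : Submodule D K → Submodule D K) : Prop :=
  ∀ E F G : Submodule D K, E ≠ ⊥ → E.FG → F ≠ ⊥ → F.FG → G ≠ ⊥ → G.FG →
    t (E * F) ≤ t (E * G) → t F ≤ t G

/-- `D` is quasi-`⋆`-integrally closed: `D^⋆ = ⋃ {(F^⋆ : F^⋆) : F ∈ f(D)}`. -/
def IsQuasiStarIntegrallyClosed (t : Submodule D K → Submodule D K) : Prop :=
  (t 1 : Set K) = ⋃ F ∈ {F : Submodule D K | F ≠ ⊥ ∧ F.FG}, ((t F / t F : Submodule D K) : Set K)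

/-- The submodule `S` of `K` is integrally closed in `K`. -/
def IsIntegrallyClosedIn (S : Submodule D K) : Prop :=
  ∀ x : K, (∃ p : Polynomial K, p.Monic ∧ (∀ i, p.coeff i ∈ S) ∧ Polynomial.eval x p = 0) → x ∈ S

/-- `D` is `⋆`-Noetherian: ACC on quasi-`⋆`-ideals. -/
def IsStarNoetherian (t : Submodule D K → Submodule D K) : Prop :=
  ∀ c : ℕ → Ideal D, (∀ n, IsQuasiIdeal t (c n)) → Monotone c →
    ∃ n, ∀ m, n ≤ m → c m = c n

/-- `D` is `⋆`-extracoherent. -/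
def IsExtraCoherent (t : Submodule D K → Submodule D K) : Prop :=
  ∀ E F : Submodule D K, E ≠ ⊥ → E.FG → F ≠ ⊥ → F.FG → E ⊓ F ≠ ⊥ →
    ∃ J : Submodule D K, J ≠ ⊥ ∧ J.FG ∧ J ≤ E ⊓ F ∧ t J = t E ⊓ t F

/-- `D` is truly `⋆`-coherent. -/
def IsTrulyCoherent (t : Submodule D K → Submodule D K) : Prop :=
  ∀ E F : Submodule D K, E ≠ ⊥ → E.FG → F ≠ ⊥ → F.FG → E ⊓ F ≠ ⊥ →
    ∃ J : Submodule D K, J ≠ ⊥ ∧ J.FG ∧ t J = t (E ⊓ F)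

/-- `D` is `⋆`-coherent. -/
def IsCoherent (t : Submodule D K → Submodule D K) : Prop :=
  ∀ E F : Submodule D K, E ≠ ⊥ → E.FG → F ≠ ⊥ → F.FG → E ⊓ F ≠ ⊥ →
    ∃ J : Submodule D K, J ≠ ⊥ ∧ J.FG ∧ t J = t E ⊓ t F

/-- `D` is `⋆`-quasi-coherent. -/
def IsQuasiCoherent (t : Submodule D K → Submodule D K) : Prop :=
  ∀ F : Submodule D K, F ≠ ⊥ → F.FG →
    ∃ G : Submodule D K, G ≠ ⊥ ∧ G.FG ∧ t ((1 : Submodule D K) / F) = t G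

/-- `D` is an `H(⋆)`-domain. -/
def IsHDomain (t : Submodule D K → Submodule D K) : Prop :=
  ∀ I : Ideal D, I ≠ ⊥ → t (idealToK I) = t 1 →
    ∃ J : Ideal D, J ≠ ⊥ ∧ J.FG ∧ J ≤ I ∧ t (idealToK J) = t 1

/-- `D` is an `I(⋆)`-domain. -/
def IsIDomain (s : SemistarOp D K) : Prop :=
  ∀ I : Submodule D K, I ≠ ⊥ → I.FG → I ≤ 1 →
    (IsStarInvertible s.star I ↔ IsStarInvertible (finStar s.star) I)



-- basic nonbot lemmas
theorem mul_ne_bot' {E F : Submodule D K} (hE : E ≠ ⊥) (hF : F ≠ ⊥) : E * F ≠ ⊥ := by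
  obtain ⟨x, hx, hx0⟩ := E.ne_bot_iff.mp hE
  obtain ⟨y, hy, hy0⟩ := F.ne_bot_iff.mp hF
  exact (E * F).ne_bot_iff.mpr ⟨x * y, Submodule.mul_mem_mul hx hy, mul_ne_zero hx0 hy0⟩

theorem one_ne_bot' : (1 : Submodule D K) ≠ ⊥ := by
  refine (Submodule.ne_bot_iff _).mpr ⟨1, ?_, one_ne_zero⟩
  exact Submodule.one_le.mp le_rfl

theorem one_fg' : (1 : Submodule D K).FG := by
  rw [Submodule.one_eq_span]; exact Submodule.fg_span_singleton 1

theorem star_ne_bot (s : SemistarOp D K) {E : Submodule D K} (hE : E ≠ ⊥) : s.star E ≠ ⊥ :=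
  fun h => hE (le_bot_iff.mp (h ▸ s.le_star E hE))

theorem mul_star_le (s : SemistarOp D K) {X Y : Submodule D K} (hX : X ≠ ⊥) (hY : Y ≠ ⊥) :
    X * s.star Y ≤ s.star (X * Y) := by
  rw [Submodule.mul_le]
  intro x hx z hz
  rcases eq_or_ne x 0 with rfl | hx0
  · rw [zero_mul]; exact zero_mem _
  have h1 : x * z ∈ span D {x} * s.star Y :=
    Submodule.mul_mem_mul (Submodule.mem_span_singleton_self x) hz
  rw [← s.star_smul_mul x hx0 Y hY] at h1
  refine s.star_mono _ _ (mul_ne_bot' ?_ hY) (mul_ne_bot' hX hY) ?_ h1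
  · exact (Submodule.ne_bot_iff _).mpr ⟨x, Submodule.mem_span_singleton_self x, hx0⟩
  · exact mul_le_mul_left ((Submodule.span_singleton_le_iff_mem x X).mpr hx) _

theorem star_mul_star (s : SemistarOp D K) {X Y : Submodule D K} (hX : X ≠ ⊥) (hY : Y ≠ ⊥) :
    s.star (X * s.star Y) = s.star (X * Y) := by
  have hXY : X * Y ≠ ⊥ := mul_ne_bot' hX hY
  have hXsY : X * s.star Y ≠ ⊥ := fun h =>
    hXY (le_bot_iff.mp (h ▸ mul_le_mul_right (s.le_star Y hY) _))
  refine le_antisymm ?_ (s.star_mono _ _ hXY hXsY (mul_le_mul_right (s.le_star Y hY) _))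
  have := s.star_mono _ _ hXsY (star_ne_bot s hXY) (mul_star_le s hX hY)
  rwa [s.star_star _ hXY] at this

section Frac
variable [IsDomain D] [IsFractionRing D K]

theorem exists_smul_le_one {F : Submodule D K} (hF : F.FG) :
    ∃ α : K, α ≠ 0 ∧ span D {α} * F ≤ (1 : Submodule D K) := by
  obtain ⟨a, ha, h⟩ := FractionalIdeal.isFractional_of_fg (S := nonZeroDivisors D) hF
  refine ⟨algebraMap D K a, ?_, ?_⟩
  · exact (map_ne_zero_iff _ (IsFractionRing.injective D K)).mpr (nonZeroDivisors.ne_zero ha)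
  · rw [Submodule.mul_le]
    intro x hx b hb
    rw [Submodule.mem_span_singleton] at hx
    obtain ⟨d, rfl⟩ := hx
    obtain ⟨r, hr⟩ := h b hb
    have : algebraMap D K a * b = a • b := (Algebra.smul_def a b).symm
    rw [smul_mul_assoc, this, ← hr]
    exact Submodule.smul_mem _ d (Submodule.algebraMap_mem r)

theorem one_div_ne_bot {F : Submodule D K} (hF : F.FG) : (1 : Submodule D K) / F ≠ ⊥ := by
  obtain ⟨α, hα, h⟩ := exists_smul_le_one hF
  refine (Submodule.ne_bot_iff _).mpr ⟨α, ?_, hα⟩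
  rw [Submodule.mem_div_iff_forall_mul_mem]
  intro y hy
  exact h (Submodule.mul_mem_mul (Submodule.mem_span_singleton_self α) hy)

theorem mul_one_div_le_div {E F : Submodule D K} : E * ((1 : Submodule D K) / F) ≤ E / F := by
  rw [Submodule.le_div_iff_mul_le, mul_assoc]
  have h1 : (1 : Submodule D K) / F * F ≤ 1 := Submodule.le_div_iff_mul_le.mp le_rfl
  have h2 : E * ((1 : Submodule D K) / F * F) ≤ E * 1 := mul_le_mul_right h1 _
  rw [mul_one] at h2
  exact h2

theorem div_ne_bot {E F : Submodule D K} (hE : E ≠ ⊥) (hF : F.FG) : E / F ≠ ⊥ := by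
  intro h
  exact mul_ne_bot' hE (one_div_ne_bot hF) (le_bot_iff.mp (h ▸ mul_one_div_le_div))

theorem div_mul_le' (E F : Submodule D K) : F * (E / F) ≤ E := by
  rw [mul_comm]; exact Submodule.le_div_iff_mul_le.mp le_rfl

end Frac

-- finStar lemmas
theorem star_le_finStar (s : SemistarOp D K) {G E : Submodule D K} (hG : G ≠ ⊥) (hGfg : G.FG)
    (hGE : G ≤ E) : s.star G ≤ finStar s.star E :=
  le_iSup₂_of_le G ⟨hG, hGfg, hGE⟩ le_rfl

theorem finStar_mono (t : Submodule D K → Submodule D K) {E F : Submodule D K} (h : E ≤ F) :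
    finStar t E ≤ finStar t F :=
  iSup₂_le fun G hG => le_iSup₂_of_le G ⟨hG.1, hG.2.1, hG.2.2.trans h⟩ le_rfl

theorem finStar_le_star (s : SemistarOp D K) {E : Submodule D K} (hE : E ≠ ⊥) :
    finStar s.star E ≤ s.star E :=
  iSup₂_le fun G hG => s.star_mono G E hG.1 hE hG.2.2

theorem finStar_eq (s : SemistarOp D K) {E : Submodule D K} (hE : E ≠ ⊥) (hfg : E.FG) :
    finStar s.star E = s.star E :=
  le_antisymm (finStar_le_star s hE) (star_le_finStar s hE hfg le_rfl)

theorem sup_ne_bot_left {A B : Submodule D K} (hA : A ≠ ⊥) : A ⊔ B ≠ ⊥ :=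
  fun h => hA (le_bot_iff.mp (h ▸ le_sup_left))

theorem mem_finStar (s : SemistarOp D K) {E : Submodule D K} (hE : E ≠ ⊥) {x : K}
    (hx : x ∈ finStar s.star E) : ∃ G, G ≠ ⊥ ∧ G.FG ∧ G ≤ E ∧ x ∈ s.star G := by
  obtain ⟨e, he, he0⟩ := E.ne_bot_iff.mp hE
  have hne : Nonempty {F : Submodule D K // F ≠ ⊥ ∧ F.FG ∧ F ≤ E} :=
    ⟨⟨span D {e}, (Submodule.ne_bot_iff _).mpr ⟨e, Submodule.mem_span_singleton_self e, he0⟩,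
      Submodule.fg_span_singleton e, (Submodule.span_singleton_le_iff_mem e E).mpr he⟩⟩
  have hdir : Directed (· ≤ ·)
      (fun F : {F : Submodule D K // F ≠ ⊥ ∧ F.FG ∧ F ≤ E} => s.star F.1) := by
    rintro ⟨F₁, h₁⟩ ⟨F₂, h₂⟩
    exact ⟨⟨F₁ ⊔ F₂, sup_ne_bot_left h₁.1, h₁.2.1.sup h₂.2.1, sup_le h₁.2.2 h₂.2.2⟩,
      s.star_mono _ _ h₁.1 (sup_ne_bot_left h₁.1) le_sup_left,
      s.star_mono _ _ h₂.1 (sup_ne_bot_left h₁.1) le_sup_right⟩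
  have heq : finStar s.star E
      = ⨆ F : {F : Submodule D K // F ≠ ⊥ ∧ F.FG ∧ F ≤ E}, s.star F.1 := by
    rw [finStar, iSup_subtype']
    rfl
  rw [heq, Submodule.mem_iSup_of_directed _ hdir] at hx
  obtain ⟨⟨G, hG⟩, hxG⟩ := hx
  exact ⟨G, hG.1, hG.2.1, hG.2.2, hxG⟩

theorem le_star_of_le_finStar (s : SemistarOp D K) {A B : Submodule D K} (hA : A.FG)
    (hB : B ≠ ⊥) (h : A ≤ finStar s.star B) :
    ∃ G, G ≠ ⊥ ∧ G.FG ∧ G ≤ B ∧ A ≤ s.star G := by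
  obtain ⟨sA, rfl⟩ := hA
  classical
  revert h
  induction sA using Finset.induction_on with
  | empty =>
    intro h
    obtain ⟨b, hb, hb0⟩ := B.ne_bot_iff.mp hB
    refine ⟨span D {b}, (Submodule.ne_bot_iff _).mpr
      ⟨b, Submodule.mem_span_singleton_self b, hb0⟩, Submodule.fg_span_singleton b,
      (Submodule.span_singleton_le_iff_mem b B).mpr hb, ?_⟩
    simp
  | @insert a sA haA ih =>
    intro h
    obtain ⟨G₁, hG₁b, hG₁f, hG₁B, hG₁le⟩ :=
      ih ((Submodule.span_mono (by simp)).trans h)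
    have ha' : a ∈ finStar s.star B := h (Submodule.subset_span (Finset.mem_coe.mpr (Finset.mem_insert_self a sA)))
    obtain ⟨G₂, hG₂b, hG₂f, hG₂B, hG₂m⟩ := mem_finStar s hB ha'
    refine ⟨G₁ ⊔ G₂, sup_ne_bot_left hG₁b, hG₁f.sup hG₂f, sup_le hG₁B hG₂B, ?_⟩
    rw [Finset.coe_insert, Submodule.span_insert]
    refine sup_le ?_ (hG₁le.trans (s.star_mono _ _ hG₁b (sup_ne_bot_left hG₁b) le_sup_left))
    rw [Submodule.span_singleton_le_iff_mem]
    exact s.star_mono _ _ hG₂b (sup_ne_bot_left hG₁b) le_sup_right hG₂m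

theorem exists_fg_of_mem_mul {F C : Submodule D K} {x : K} (hx : x ∈ F * C) :
    ∃ C₀ : Submodule D K, C₀.FG ∧ C₀ ≤ C ∧ x ∈ F * C₀ := by
  refine Submodule.mul_induction_on hx ?_ ?_
  · intro f hf c hc
    exact ⟨span D {c}, Submodule.fg_span_singleton c,
      (Submodule.span_singleton_le_iff_mem c C).mpr hc,
      Submodule.mul_mem_mul hf (Submodule.mem_span_singleton_self c)⟩
  · rintro x y ⟨C₁, h1f, h1le, h1m⟩ ⟨C₂, h2f, h2le, h2m⟩
    exact ⟨C₁ ⊔ C₂, h1f.sup h2f, sup_le h1le h2le,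
      add_mem ((mul_le_mul_right (le_sup_left (b := C₂)) F) h1m)
        ((mul_le_mul_right (le_sup_right (a := C₁)) F) h2m)⟩

theorem exists_fg_le_of_le_mul {F C G : Submodule D K} (hG : G.FG) (h : G ≤ F * C) :
    ∃ C₀ : Submodule D K, C₀.FG ∧ C₀ ≤ C ∧ G ≤ F * C₀ := by
  obtain ⟨sG, rfl⟩ := hG
  classical
  revert h
  induction sG using Finset.induction_on with
  | empty => exact fun _ => ⟨⊥, Submodule.fg_bot, bot_le, by simp⟩
  | @insert a sA haA ih =>
    intro h
    obtain ⟨C₁, h1f, h1le, h1m⟩ := ih ((Submodule.span_mono (by simp)).trans h)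
    obtain ⟨C₂, h2f, h2le, h2m⟩ := exists_fg_of_mem_mul (h (Submodule.subset_span (Finset.mem_coe.mpr (Finset.mem_insert_self a sA))))
    refine ⟨C₁ ⊔ C₂, h1f.sup h2f, sup_le h1le h2le, ?_⟩
    rw [Finset.coe_insert, Submodule.span_insert]
    refine sup_le ?_ (h1m.trans (mul_le_mul_right le_sup_left _))
    rw [Submodule.span_singleton_le_iff_mem]
    exact (mul_le_mul_right (le_sup_right (a := C₁)) F) h2m

theorem one_div_span_mul {x : K} (hx : x ≠ 0) (F : Submodule D K) :
    (1 : Submodule D K) / (span D {x} * F) = span D {x⁻¹} * ((1 : Submodule D K) / F) := by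
  ext y
  rw [Submodule.mem_div_iff_forall_mul_mem, Submodule.mem_span_singleton_mul]
  constructor
  · intro h
    refine ⟨x * y, ?_, by field_simp⟩
    rw [Submodule.mem_div_iff_forall_mul_mem]
    intro f hf
    have := h (x * f) (Submodule.mul_mem_mul (Submodule.mem_span_singleton_self x) hf)
    rwa [show y * (x * f) = x * y * f by ring] at this
  · rintro ⟨w, hw, rfl⟩
    intro z hz
    rw [Submodule.mem_span_singleton_mul] at hz
    obtain ⟨f, hf, rfl⟩ := hz
    rw [Submodule.mem_div_iff_forall_mul_mem] at hw
    have := hw f hf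
    rwa [show x⁻¹ * w * (x * f) = w * f by field_simp]

section Frac2
variable [IsDomain D] [IsFractionRing D K]

theorem isFractional_div {E F : Submodule D K} (hE : E.FG) (hF : F ≠ ⊥) :
    IsFractional (nonZeroDivisors D) (E / F) := by
  obtain ⟨f, hf, hf0⟩ := F.ne_bot_iff.mp hF
  obtain ⟨aE, haE, hE'⟩ := FractionalIdeal.isFractional_of_fg (S := nonZeroDivisors D) hE
  obtain ⟨⟨n, m⟩, hm⟩ := IsLocalization.surj (nonZeroDivisors D) f
  have hm0 : algebraMap D K (m : D) ≠ 0 :=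
    (map_ne_zero_iff _ (IsFractionRing.injective D K)).mpr (nonZeroDivisors.ne_zero m.2)
  have hn0 : n ≠ 0 := by
    intro h
    rw [h, map_zero] at hm
    exact mul_ne_zero hf0 hm0 hm
  refine ⟨aE * n, mul_mem haE (mem_nonZeroDivisors_of_ne_zero hn0), ?_⟩
  intro x hx
  rw [Submodule.mem_div_iff_forall_mul_mem] at hx
  obtain ⟨r, hr⟩ := hE' (x * f) (hx f hf)
  refine ⟨(m : D) * r, ?_⟩
  rw [map_mul, hr, Algebra.smul_def, Algebra.smul_def, map_mul]
  rw [← hm]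
  ring

theorem mem_div_ne_zero {E F : Submodule D K} (hE : E ≠ ⊥) (hF : F.FG) :
    ∃ w : K, w ≠ 0 ∧ w ∈ E / F := by
  have h1 : E * ((1 : Submodule D K) / F) ≠ ⊥ := mul_ne_bot' hE (one_div_ne_bot hF)
  obtain ⟨w, hw, hw0⟩ := (Submodule.ne_bot_iff _).mp h1
  exact ⟨w, hw0, mul_one_div_le_div hw⟩

end Frac2

section Main
variable [IsDomain D] [IsFractionRing D K]

theorem sd13 (s : SemistarOp D K) (hi : IsStarDomain s.star) :
    ∀ E F : Submodule D K, E ≠ ⊥ → E.FG → F ≠ ⊥ → F.FG →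
      s.star (F * (E / F)) = s.star E := by
  intro E F hE hEfg hF hFfg
  have h1f : (1 : Submodule D K) / F ≠ ⊥ := one_div_ne_bot hFfg
  have hFF : F * ((1 : Submodule D K) / F) ≠ ⊥ := mul_ne_bot' hF h1f
  have hinv : s.star (F * ((1 : Submodule D K) / F)) = s.star 1 := hi F hF hFfg
  have key : s.star (E * (F * ((1 : Submodule D K) / F))) = s.star E := by
    rw [← star_mul_star s hE hFF, hinv, star_mul_star s hE one_ne_bot', mul_one]
  have hle1 : E * (F * ((1 : Submodule D K) / F)) ≤ F * (E / F) := by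
    rw [show E * (F * ((1 : Submodule D K) / F)) = F * (E * ((1 : Submodule D K) / F)) by ring]
    exact mul_le_mul_right mul_one_div_le_div _
  have hle2 : F * (E / F) ≤ E := div_mul_le' E F
  have hb1 : E * (F * ((1 : Submodule D K) / F)) ≠ ⊥ := mul_ne_bot' hE hFF
  have hne : F * (E / F) ≠ ⊥ := fun hb => hb1 (le_bot_iff.mp (hb ▸ hle1))
  refine le_antisymm (s.star_mono _ _ hne hE hle2) ?_
  rw [← key]
  exact s.star_mono _ _ hb1 hne hle1

theorem sd32 (s : SemistarOp D K)
    (h3 : ∀ E F : Submodule D K, E ≠ ⊥ → E.FG → F ≠ ⊥ → F.FG →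
      s.star (F * (E / F)) = s.star E) :
    ∀ E F : Submodule D K, E ≠ ⊥ → E.FG → F ≠ ⊥ → F.FG →
      ∃ H : Submodule D K, H ≠ ⊥ ∧ IsFractional (nonZeroDivisors D) H ∧ H ≤ E / F ∧
        s.star E = s.star (F * H) := by
  intro E F hE hEfg hF hFfg
  exact ⟨E / F, div_ne_bot hE hFfg, isFractional_div hEfg hF, le_rfl,
    (h3 E F hE hEfg hF hFfg).symm⟩

theorem sd21 (s : SemistarOp D K)
    (h2 : ∀ E F : Submodule D K, E ≠ ⊥ → E.FG → F ≠ ⊥ → F.FG →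
      ∃ H : Submodule D K, H ≠ ⊥ ∧ IsFractional (nonZeroDivisors D) H ∧ H ≤ E / F ∧
        s.star E = s.star (F * H)) :
    IsStarDomain s.star := by
  intro I hI hIfg
  obtain ⟨H, hHb, _, hHle, hstar⟩ := h2 1 I one_ne_bot' one_fg' hI hIfg
  have hIH : I * H ≠ ⊥ := mul_ne_bot' hI hHb
  have hle1 : I * H ≤ I * ((1 : Submodule D K) / I) := mul_le_mul_right hHle _
  have hle2 : I * ((1 : Submodule D K) / I) ≤ 1 := div_mul_le' 1 I
  have hne : I * ((1 : Submodule D K) / I) ≠ ⊥ := fun hb => hIH (le_bot_iff.mp (hb ▸ hle1))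
  refine le_antisymm (s.star_mono _ _ hne one_ne_bot' hle2) ?_
  rw [hstar]
  exact s.star_mono _ _ hIH hne hle1

theorem pmd13 (s : SemistarOp D K) (hi : IsPStarMD s) :
    ∀ E F : Submodule D K, E ≠ ⊥ → E.FG → F ≠ ⊥ → F.FG →
      finStar s.star (F * (E / F)) = s.star E := by
  intro E F hE hEfg hF hFfg
  obtain ⟨α, hα, hαF⟩ := exists_smul_le_one hFfg
  have hαb : span D {α} ≠ ⊥ :=
    (Submodule.ne_bot_iff _).mpr ⟨α, Submodule.mem_span_singleton_self α, hα⟩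
  have hIb : span D {α} * F ≠ ⊥ := mul_ne_bot' hαb hF
  have hIfg : (span D {α} * F).FG := (Submodule.fg_span_singleton α).mul hFfg
  have hinv := hi (span D {α} * F) hIb hIfg hαF
  have hFI : F * ((1 : Submodule D K) / F)
      = span D {α} * F * ((1 : Submodule D K) / (span D {α} * F)) := by
    rw [one_div_span_mul hα F,
      show span D {α} * F * (span D {α⁻¹} * ((1 : Submodule D K) / F))
        = (span D {α} * span D {α⁻¹}) * (F * ((1 : Submodule D K) / F)) by ring,
      Submodule.span_mul_span, Set.singleton_mul_singleton, mul_inv_cancel₀ hα,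
      ← Submodule.one_eq_span, one_mul]
  have h1f : (1 : Submodule D K) / F ≠ ⊥ := one_div_ne_bot hFfg
  have hFFb : F * ((1 : Submodule D K) / F) ≠ ⊥ := mul_ne_bot' hF h1f
  have h1mem : (1 : K) ∈ finStar s.star (F * ((1 : Submodule D K) / F)) := by
    rw [hFI]
    unfold IsStarInvertible at hinv
    rw [hinv, finStar_eq s one_ne_bot' one_fg']
    exact s.le_star 1 one_ne_bot' (Submodule.one_le.mp le_rfl)
  obtain ⟨G, hGb, hGfg, hGle, h1G⟩ := mem_finStar s hFFb h1mem
  have h1le : (1 : Submodule D K) ≤ s.star G := Submodule.one_le.mpr h1G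
  have hEb' : E * s.star G ≠ ⊥ := mul_ne_bot' hE (star_ne_bot s hGb)
  have h4 : s.star E ≤ s.star (E * G) := by
    have h5 : E ≤ E * s.star G := by
      conv_lhs => rw [← mul_one E]
      exact mul_le_mul_right h1le _
    have h6 := s.star_mono _ _ hE hEb' h5
    rwa [star_mul_star s hE hGb] at h6
  have hEGle : E * G ≤ F * (E / F) := by
    calc E * G ≤ E * (F * ((1 : Submodule D K) / F)) := mul_le_mul_right hGle _
    _ = F * (E * ((1 : Submodule D K) / F)) := by ring
    _ ≤ F * (E / F) := mul_le_mul_right mul_one_div_le_div _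
  refine le_antisymm ?_
    (h4.trans (star_le_finStar s (mul_ne_bot' hE hGb) (hEfg.mul hGfg) hEGle))
  have h7 := finStar_mono s.star (div_mul_le' E F)
  rwa [finStar_eq s hE hEfg] at h7

theorem pmd32 (s : SemistarOp D K)
    (h3 : ∀ E F : Submodule D K, E ≠ ⊥ → E.FG → F ≠ ⊥ → F.FG →
      finStar s.star (F * (E / F)) = s.star E) :
    ∀ E F : Submodule D K, E ≠ ⊥ → E.FG → F ≠ ⊥ → F.FG →
      ∃ H : Submodule D K, H ≠ ⊥ ∧ H.FG ∧ H ≤ E / F ∧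
        s.star E = s.star (F * H) := by
  intro E F hE hEfg hF hFfg
  have hdivb : F * (E / F) ≠ ⊥ := mul_ne_bot' hF (div_ne_bot hE hFfg)
  have hEle : E ≤ finStar s.star (F * (E / F)) := by
    rw [h3 E F hE hEfg hF hFfg]
    exact s.le_star E hE
  obtain ⟨G, hGb, hGfg, hGle, hEstar⟩ := le_star_of_le_finStar s hEfg hdivb hEle
  obtain ⟨H₀, hH₀fg, hH₀le, hGH₀⟩ := exists_fg_le_of_le_mul hGfg hGle
  obtain ⟨w, hw0, hw⟩ := mem_div_ne_zero hE hFfg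
  have hHle : H₀ ⊔ span D {w} ≤ E / F :=
    sup_le hH₀le ((Submodule.span_singleton_le_iff_mem w _).mpr hw)
  have hHb : H₀ ⊔ span D {w} ≠ ⊥ := (Submodule.ne_bot_iff _).mpr
    ⟨w, Submodule.mem_sup_right (Submodule.mem_span_singleton_self w), hw0⟩
  refine ⟨H₀ ⊔ span D {w}, hHb, hH₀fg.sup (Submodule.fg_span_singleton w), hHle, ?_⟩
  have hFH_le_E : F * (H₀ ⊔ span D {w}) ≤ E :=
    (mul_le_mul_right hHle _).trans (div_mul_le' E F)
  have hFHb : F * (H₀ ⊔ span D {w}) ≠ ⊥ := mul_ne_bot' hF hHb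
  refine le_antisymm ?_ (s.star_mono _ _ hFHb hE hFH_le_E)
  have h6 : s.star E ≤ s.star (s.star G) := s.star_mono _ _ hE (star_ne_bot s hGb) hEstar
  rw [s.star_star _ hGb] at h6
  exact h6.trans (s.star_mono _ _ hGb hFHb
    (hGH₀.trans (mul_le_mul_right le_sup_left _)))

theorem pmd21 (s : SemistarOp D K)
    (h2 : ∀ E F : Submodule D K, E ≠ ⊥ → E.FG → F ≠ ⊥ → F.FG →
      ∃ H : Submodule D K, H ≠ ⊥ ∧ H.FG ∧ H ≤ E / F ∧
        s.star E = s.star (F * H)) :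
    IsPStarMD s := by
  intro I hIb hIfg _
  obtain ⟨H, hHb, hHfg, hHle, hstar⟩ := h2 1 I one_ne_bot' one_fg' hIb hIfg
  have hIH : I * H ≠ ⊥ := mul_ne_bot' hIb hHb
  have hle1 : I * H ≤ I * ((1 : Submodule D K) / I) := mul_le_mul_right hHle _
  have hle2 : I * ((1 : Submodule D K) / I) ≤ 1 := div_mul_le' 1 I
  unfold IsStarInvertible
  rw [finStar_eq s one_ne_bot' one_fg']
  refine le_antisymm ?_ ?_
  · have h7 := finStar_mono s.star hle2
    rwa [finStar_eq s one_ne_bot' one_fg'] at h7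
  · rw [hstar]
    exact star_le_finStar s hIH (hIfg.mul hHfg) hle1

end Main

theorem statement4 {D K : Type*} [CommRing D] [IsDomain D] [Field K] [Algebra D K]
    [IsFractionRing D K] (s : SemistarOp D K) :
    ((IsStarDomain s.star ↔
        ∀ E F : Submodule D K, E ≠ ⊥ → E.FG → F ≠ ⊥ → F.FG →
          ∃ H : Submodule D K, H ≠ ⊥ ∧ IsFractional (nonZeroDivisors D) H ∧ H ≤ E / F ∧
            s.star E = s.star (F * H)) ∧
      (IsStarDomain s.star ↔
        ∀ E F : Submodule D K, E ≠ ⊥ → E.FG → F ≠ ⊥ → F.FG →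
          s.star (F * (E / F)) = s.star E)) ∧
    ((IsPStarMD s ↔
        ∀ E F : Submodule D K, E ≠ ⊥ → E.FG → F ≠ ⊥ → F.FG →
          ∃ H : Submodule D K, H ≠ ⊥ ∧ H.FG ∧ H ≤ E / F ∧
            s.star E = s.star (F * H)) ∧
      (IsPStarMD s ↔
        ∀ E F : Submodule D K, E ≠ ⊥ → E.FG → F ≠ ⊥ → F.FG →
          finStar s.star (F * (E / F)) = s.star E)) := by
  exact ⟨⟨⟨fun hi => sd32 s (sd13 s hi), sd21 s⟩,
    ⟨sd13 s, fun h3 => sd21 s (sd32 s h3)⟩⟩,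
   ⟨⟨fun hi => pmd32 s (pmd13 s hi), pmd21 s⟩,
    ⟨pmd13 s, fun h3 => pmd21 s (pmd32 s h3)⟩⟩⟩

end Semistar
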